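/- Let 1 ≤ n < k be integers. The algebra of restrictions {x ↦ Q(0_{k−n}, x) : Q a W(D_k)-invariant polynomial on ℝ^k} equals the algebra of H_n-invariant polynomials on ℝ^n, and this also equals the algebra of restrictions {x ↦ Q(0_{k−n}, x) : Q an H_k-invariant polynomial on ℝ^k}. -/

import Mathlib

open MvPolynomial Finset

/-- The padding map `ℝ^n → ℝ^k`, `x ↦ (0_{k-n}, x)`. -/
def padk (k n : ℕ) (x : Fin n → ℝ) : Fin k → ℝ :=
  fun j => if h : (j : ℕ) < k - n then 0
    else x ⟨(j : ℕ) - (k - n), by have := j.isLt; omega⟩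

def embk (k n : ℕ) (h : n ≤ k) : Fin n ↪ Fin k :=
  ⟨fun i => ⟨(i : ℕ) + (k - n), by have := i.isLt; omega⟩,
   @id (Function.Injective _) fun a b hab => by
     simpa [Fin.ext_iff] using hab⟩

lemma padk_embk (k n : ℕ) (h : n ≤ k) (x : Fin n → ℝ) (i : Fin n) :
    padk k n x (embk k n h i) = x i := by
  unfold padk embk
  rw [dif_neg (by simp)]
  congr 1
  exact Fin.ext (by simp)

lemma padk_low {k n : ℕ} (x : Fin n → ℝ) (j : Fin k) (hj : (j : ℕ) < k - n) :
    padk k n x j = 0 := dif_pos hj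

lemma mem_map_embk {k n : ℕ} (h : n ≤ k) (j : Fin k) :
    j ∈ Finset.univ.map (embk k n h) ↔ k - n ≤ (j : ℕ) := by
  simp only [Finset.mem_map, Finset.mem_univ, true_and, embk, Function.Embedding.coeFn_mk]
  constructor
  · rintro ⟨i, rfl⟩; simp
  · intro hj
    exact ⟨⟨(j : ℕ) - (k - n), by have := j.isLt; omega⟩, Fin.ext (by simp; omega)⟩

lemma eval_aeval' {σ τ : Type*} (x : τ → ℝ) (g : σ → MvPolynomial τ ℝ)
    (p : MvPolynomial σ ℝ) :
    eval x (aeval g p) = eval (fun i => eval x (g i)) p := by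
  induction p using MvPolynomial.induction_on with
  | C a => simp
  | add p q hp hq => simp only [map_add, hp, hq]
  | mul_X p i hp => simp only [map_mul, aeval_X, eval_mul, eval_X, hp]

lemma scale_monomial {n : ℕ} (c : Fin n → ℝ) (d : Fin n →₀ ℕ) (r : ℝ) :
    aeval (fun j => C (c j) * X j : Fin n → MvPolynomial (Fin n) ℝ) (monomial d r)
      = (∏ j ∈ d.support, c j ^ d j) • monomial d r := by
  rw [aeval_monomial, monomial_eq, Finsupp.prod, Finsupp.prod]
  simp_rw [mul_pow, ← C_pow]
  rw [Finset.prod_mul_distrib,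
    ← map_prod (C : ℝ →+* MvPolynomial (Fin n) ℝ) (fun j => c j ^ d j) d.support,
    smul_eq_C_mul, algebraMap_eq]
  ring

lemma coeff_scale {n : ℕ} (c : Fin n → ℝ) (P : MvPolynomial (Fin n) ℝ) (d : Fin n →₀ ℕ) :
    coeff d (aeval (fun j => C (c j) * X j) P)
      = (∏ j ∈ d.support, c j ^ d j) * coeff d P := by
  conv_lhs => rw [P.as_sum]
  rw [map_sum, coeff_sum]
  simp_rw [scale_monomial, coeff_smul, coeff_monomial, smul_eq_mul, mul_ite, mul_zero]
  rw [Finset.sum_ite_eq' P.support d]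
  by_cases hd : d ∈ P.support
  · simp [hd]
  · simp [hd, MvPolynomial.notMem_support_iff.mp hd]

lemma expand_two_monomial {n : ℕ} (t : Fin n →₀ ℕ) (r : ℝ) :
    expand 2 (monomial t r : MvPolynomial (Fin n) ℝ) = monomial (2 • t) r := by
  rw [expand_monomial, monomial_eq, Finsupp.prod]

lemma coeff_expand_two {n : ℕ} (S : MvPolynomial (Fin n) ℝ) (d : Fin n →₀ ℕ) :
    coeff (2 • d) (expand 2 S) = coeff d S := by
  conv_lhs => rw [S.as_sum]
  rw [map_sum, coeff_sum]
  simp_rw [expand_two_monomial, coeff_monomial]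
  have hinj : ∀ t : Fin n →₀ ℕ, ((2 • t = 2 • d) = (t = d)) := by
    intro t
    simp only [eq_iff_iff]
    constructor
    · intro h2
      ext j
      have := DFunLike.congr_fun h2 j
      simp only [Finsupp.smul_apply, smul_eq_mul] at this
      omega
    · rintro rfl; rfl
  simp_rw [hinj]
  rw [Finset.sum_ite_eq' S.support d]
  by_cases hd : d ∈ S.support
  · simp [hd]
  · simp [hd, MvPolynomial.notMem_support_iff.mp hd]

lemma expand_two_inj {n : ℕ} {S T : MvPolynomial (Fin n) ℝ}
    (h : expand 2 S = expand 2 T) : S = T := by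
  ext d
  rw [← coeff_expand_two S d, ← coeff_expand_two T d, h]

lemma exists_expand {n : ℕ} (P : MvPolynomial (Fin n) ℝ)
    (h : ∀ d ∈ P.support, ∀ i, 2 ∣ d i) : ∃ S, expand 2 S = P := by
  refine ⟨∑ d ∈ P.support, monomial (d.mapRange (· / 2) (by simp)) (coeff d P), ?_⟩
  rw [map_sum]
  simp_rw [expand_two_monomial]
  conv_rhs => rw [P.as_sum]
  refine Finset.sum_congr rfl fun d hd => ?_
  have h2 : (2 : ℕ) • d.mapRange (· / 2) (by simp) = d := by
    ext j
    have := h d hd j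
    simp only [Finsupp.smul_apply, Finsupp.mapRange_apply, smul_eq_mul]
    omega
  rw [h2]

lemma eval_expand_two {n : ℕ} (y : Fin n → ℝ) (p : MvPolynomial (Fin n) ℝ) :
    eval y (expand 2 p) = eval (fun i => y i ^ 2) p := by
  induction p using MvPolynomial.induction_on with
  | C a => simp
  | add p q hp hq => simp only [map_add, hp, hq]
  | mul_X p i hp => simp only [map_mul, expand_X, eval_mul, eval_pow, eval_X, hp]

lemma eval_esymm_padk {k n : ℕ} (h : n ≤ k) (r : ℕ) (x : Fin n → ℝ) :
    eval (padk k n x) (esymm (Fin k) ℝ r) = eval x (esymm (Fin n) ℝ r) := by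
  rw [esymm, esymm, map_sum, map_sum]
  simp_rw [eval_prod, eval_X]
  have hzero : ∀ T ∈ powersetCard r (univ : Finset (Fin k)),
      T ∉ powersetCard r (Finset.univ.map (embk k n h)) → ∏ j ∈ T, padk k n x j = 0 := by
    intro T hT hT'
    rw [Finset.mem_powersetCard] at hT hT'
    have hns : ¬ T ⊆ Finset.univ.map (embk k n h) := fun hsub => hT' ⟨hsub, hT.2⟩
    obtain ⟨j, hjT, hj⟩ := Finset.not_subset.mp hns
    rw [mem_map_embk h] at hj
    exact Finset.prod_eq_zero hjT (padk_low x j (by omega))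
  rw [← Finset.sum_subset (Finset.powersetCard_mono (Finset.subset_univ _)) hzero]
  rw [Finset.powersetCard_map, Finset.sum_map]
  refine Finset.sum_congr rfl fun S hS => ?_
  rw [RelEmbedding.coe_toEmbedding, Finset.mapEmbedding_apply, Finset.prod_map]
  exact Finset.prod_congr rfl fun i _ => padk_embk k n h x i

lemma prod_pm {m : ℕ} (ε : Fin m → ℝ) (hε : ∀ j, ε j = 1 ∨ ε j = -1) :
    (∏ j, ε j) = 1 ∨ (∏ j, ε j) = -1 :=
  Finset.prod_induction ε (fun r => r = 1 ∨ r = -1)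
    (by rintro a b (rfl | rfl) (rfl | rfl) <;> norm_num)
    (Or.inl rfl) (fun i _ => hε i)

def equivkn (k n : ℕ) (h : n ≤ k) : Fin (k - n) ⊕ Fin n ≃ Fin k :=
  finSumFinEquiv.trans (finCongr (by omega))

lemma equivkn_inl {k n : ℕ} (h : n ≤ k) (a : Fin (k - n)) :
    ((equivkn k n h (Sum.inl a) : Fin k) : ℕ) = (a : ℕ) := by
  simp [equivkn]

lemma equivkn_inr {k n : ℕ} (h : n ≤ k) (i : Fin n) :
    ((equivkn k n h (Sum.inr i) : Fin k) : ℕ) = (k - n) + (i : ℕ) := by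
  simp [equivkn]

def extPerm (k n : ℕ) (h : n ≤ k) (σ : Equiv.Perm (Fin n)) : Equiv.Perm (Fin k) :=
  (equivkn k n h).symm.trans ((Equiv.sumCongr (Equiv.refl _) σ).trans (equivkn k n h))

lemma extPerm_low {k n : ℕ} (h : n ≤ k) (σ : Equiv.Perm (Fin n)) (j : Fin k)
    (hj : (j : ℕ) < k - n) : extPerm k n h σ j = j := by
  have h1 : equivkn k n h (Sum.inl ⟨(j : ℕ), hj⟩) = j := Fin.ext (equivkn_inl h _)
  simp only [extPerm, Equiv.trans_apply]
  rw [← h1, Equiv.symm_apply_apply]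
  simpa using h1

lemma extPerm_embk {k n : ℕ} (h : n ≤ k) (σ : Equiv.Perm (Fin n)) (i : Fin n) :
    extPerm k n h σ (embk k n h i) = embk k n h (σ i) := by
  have h1 : equivkn k n h (Sum.inr i) = embk k n h i :=
    Fin.ext (by rw [equivkn_inr]; simp [embk]; omega)
  have h2 : equivkn k n h (Sum.inr (σ i)) = embk k n h (σ i) :=
    Fin.ext (by rw [equivkn_inr]; simp [embk]; omega)
  simp only [extPerm, Equiv.trans_apply]
  rw [← h1, Equiv.symm_apply_apply]
  simpa using h2

lemma epsk_embk {k n : ℕ} (h : n ≤ k) (ε : Fin n → ℝ) (c : ℝ) (i : Fin n) :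
    (fun j : Fin k => if hj : (j : ℕ) < k - n
        then (if (j : ℕ) = 0 ∧ c = -1 then -1 else 1)
        else ε ⟨(j : ℕ) - (k - n), by have := j.isLt; omega⟩) (embk k n h i) = ε i := by
  simp only [embk, Function.Embedding.coeFn_mk]
  simp only [show ¬ ((i : ℕ) + (k - n) < k - n) by omega, ↓reduceDIte]
  congr 1
  exact Fin.ext (by simp)

/-- `P` is invariant under the hyperoctahedral group `H_m`. -/
def HInv (m : ℕ) (P : MvPolynomial (Fin m) ℝ) : Prop :=
  ∀ (σ : Equiv.Perm (Fin m)) (ε : Fin m → ℝ), (∀ j, ε j = 1 ∨ ε j = -1) →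
    ∀ x : Fin m → ℝ,
      MvPolynomial.eval (fun j => ε j * x (σ j)) P = MvPolynomial.eval x P

/-- `P` is invariant under `W(D_m)` (even number of sign changes). -/
def DInv (m : ℕ) (P : MvPolynomial (Fin m) ℝ) : Prop :=
  ∀ (σ : Equiv.Perm (Fin m)) (ε : Fin m → ℝ), (∀ j, ε j = 1 ∨ ε j = -1) →
    (∏ j, ε j) = 1 →
    ∀ x : Fin m → ℝ,
      MvPolynomial.eval (fun j => ε j * x (σ j)) P = MvPolynomial.eval x P

lemma L1 {n k : ℕ} (hn : 1 ≤ n) (hnk : n < k) {Q : MvPolynomial (Fin k) ℝ}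
    (hQ : DInv k Q) :
    ∃ P : MvPolynomial (Fin n) ℝ, HInv n P ∧
      ∀ x, MvPolynomial.eval (padk k n x) Q = MvPolynomial.eval x P := by
  have hkn : n ≤ k := hnk.le
  set g : Fin k → MvPolynomial (Fin n) ℝ := fun j =>
    if hj : (j : ℕ) < k - n then 0
    else X ⟨(j : ℕ) - (k - n), by have := j.isLt; omega⟩ with hg
  have key : ∀ y : Fin n → ℝ, eval y (aeval g Q) = eval (padk k n y) Q := by
    intro y
    rw [eval_aeval']
    have hfun : (fun i => eval y (g i)) = padk k n y := by
      funext j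
      by_cases hj : (j : ℕ) < k - n <;> simp [hg, padk, hj]
    rw [hfun]
  refine ⟨aeval g Q, ?_, fun x => (key x).symm⟩
  intro σ ε hε x
  rw [key, key]
  set ε' : Fin k → ℝ := fun j => if hj : (j : ℕ) < k - n
      then (if (j : ℕ) = 0 ∧ (∏ i, ε i) = -1 then -1 else 1)
      else ε ⟨(j : ℕ) - (k - n), by have := j.isLt; omega⟩ with hε'def
  have hε'pm : ∀ j, ε' j = 1 ∨ ε' j = -1 := by
    intro j
    simp only [hε'def]
    split_ifs with h1 h2
    · right; rfl
    · left; rfl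
    · exact hε _
  have hεpm := prod_pm ε hε
  have hsplit : (Finset.univ : Finset (Fin k)) =
      (Finset.univ.filter fun j : Fin k => (j : ℕ) < k - n) ∪ Finset.univ.map (embk k n hkn) := by
    ext j
    simp only [Finset.mem_univ, Finset.mem_union, Finset.mem_filter, true_and, mem_map_embk hkn,
      true_iff]
    omega
  have hdisj : Disjoint (Finset.univ.filter fun j : Fin k => (j : ℕ) < k - n)
      (Finset.univ.map (embk k n hkn)) := by
    rw [Finset.disjoint_left]
    intro j hj hj'
    rw [Finset.mem_filter] at hj
    rw [mem_map_embk hkn] at hj'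
    omega
  have hembk : ∀ i : Fin n, ε' (embk k n hkn i) = ε i := epsk_embk hkn ε _
  have hprod1 : (∏ j, ε' j) = 1 := by
    rw [hsplit, Finset.prod_union hdisj, Finset.prod_map]
    have hhigh : (∏ i : Fin n, ε' (embk k n hkn i)) = ∏ i, ε i :=
      Finset.prod_congr rfl fun i _ => hembk i
    rcases hεpm with hpe | hpe
    · have hlow : (∏ j ∈ Finset.univ.filter fun j : Fin k => (j : ℕ) < k - n, ε' j) = 1 := by
        refine Finset.prod_eq_one fun j hj => ?_
        rw [Finset.mem_filter] at hj
        simp only [hε'def]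
        rw [dif_pos hj.2, if_neg (by rw [hpe]; norm_num)]
      rw [hlow, hhigh, hpe, one_mul]
    · have h0 : (0 : ℕ) < k - n := by omega
      have hlow : (∏ j ∈ Finset.univ.filter fun j : Fin k => (j : ℕ) < k - n, ε' j) = -1 := by
        have hmem : (⟨0, by omega⟩ : Fin k) ∈
            Finset.univ.filter fun j : Fin k => (j : ℕ) < k - n := by
          rw [Finset.mem_filter]
          exact ⟨Finset.mem_univ _, h0⟩
        have hothers : ∀ j ∈ Finset.univ.filter fun j : Fin k => (j : ℕ) < k - n,
            j ≠ (⟨0, by omega⟩ : Fin k) → ε' j = 1 := by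
          intro j hj hne
          rw [Finset.mem_filter] at hj
          simp only [hε'def]
          rw [dif_pos hj.2, if_neg]
          rintro ⟨hj0, -⟩
          exact hne (Fin.ext hj0)
        rw [Finset.prod_eq_single_of_mem _ hmem hothers]
        simp only [hε'def]
        rw [dif_pos h0]
        simp [hpe]
      rw [hlow, hhigh, hpe]
      norm_num
  have hkey : (fun j => ε' j * padk k n x (extPerm k n hkn σ j)) =
      padk k n (fun i => ε i * x (σ i)) := by
    funext j
    rcases lt_or_ge (j : ℕ) (k - n) with hj | hj
    · rw [extPerm_low hkn σ j hj, padk_low x j hj, padk_low _ j hj, mul_zero]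
    · obtain ⟨i, rfl⟩ : ∃ i, embk k n hkn i = j :=
        ⟨⟨(j : ℕ) - (k - n), by have := j.isLt; omega⟩, Fin.ext (by simp [embk]; omega)⟩
      rw [extPerm_embk, padk_embk, padk_embk, hembk]
  have hfin := hQ (extPerm k n hkn σ) ε' hε'pm hprod1 (padk k n x)
  rw [hkey] at hfin
  exact hfin

lemma L2 {n k : ℕ} (hnk : n < k) {P : MvPolynomial (Fin n) ℝ} (hP : HInv n P) :
    ∃ Q : MvPolynomial (Fin k) ℝ, HInv k Q ∧
      ∀ x, MvPolynomial.eval (padk k n x) Q = MvPolynomial.eval x P := by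
  have hkn : n ≤ k := hnk.le
  have hsym : ∀ e : Equiv.Perm (Fin n), rename e P = P := by
    intro e
    apply MvPolynomial.funext
    intro x
    rw [eval_rename]
    simpa [Function.comp_def] using hP e (fun _ => 1) (fun _ => Or.inl rfl) x
  have heven : ∀ d ∈ P.support, ∀ i : Fin n, 2 ∣ d i := by
    intro d hd i
    set c : Fin n → ℝ := fun j => if j = i then -1 else 1 with hc
    have hcpm : ∀ j, c j = 1 ∨ c j = -1 := by
      intro j
      simp only [hc]
      split_ifs
      · right; rfl
      · left; rfl
    have hscale : aeval (fun j => C (c j) * X j) P = P := by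
      apply MvPolynomial.funext
      intro x
      rw [eval_aeval']
      have h1 : (fun j => eval x (C (c j) * X j)) = fun j => c j * x j := by
        funext j; simp
      rw [h1]
      simpa using hP (Equiv.refl _) c hcpm x
    have hco := coeff_scale c P d
    rw [hscale] at hco
    have hprodc : (∏ j ∈ d.support, c j ^ d j) = (-1 : ℝ) ^ d i := by
      have hcong : ∀ j ∈ d.support, c j ^ d j = if j = i then (-1 : ℝ) ^ d j else 1 := by
        intro j _
        simp only [hc]
        split_ifs <;> simp
      rw [Finset.prod_congr rfl hcong, Finset.prod_ite_eq' d.support i (fun j => (-1 : ℝ) ^ d j)]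
      by_cases hi : i ∈ d.support
      · simp [hi]
      · simp [hi, Finsupp.notMem_support_iff.mp hi]
    rw [hprodc] at hco
    by_contra hodd
    have hneg : (-1 : ℝ) ^ d i = -1 := Odd.neg_one_pow (Nat.odd_iff.mpr (by omega))
    rw [hneg] at hco
    have hzero : coeff d P = 0 := by linarith
    exact (MvPolynomial.mem_support_iff.mp hd) hzero
  obtain ⟨S, hS⟩ := exists_expand P heven
  have hSsym : S.IsSymmetric := by
    intro e
    apply expand_two_inj
    rw [← rename_expand, hS, hsym e]
  obtain ⟨F, hF⟩ := MvPolynomial.esymmAlgHom_fin_surjective (R := ℝ) (m := n) (n := n)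
    le_rfl ⟨S, hSsym⟩
  have hFval : aeval (fun i : Fin n => esymm (Fin n) ℝ ((i : ℕ) + 1)) F = S := by
    have h' := congrArg Subtype.val hF
    rwa [esymmAlgHom_apply] at h'
  set T : symmetricSubalgebra (Fin k) ℝ := esymmAlgHom (Fin k) ℝ n F with hTdef
  have hTval : (T : MvPolynomial (Fin k) ℝ) =
      aeval (fun i : Fin n => esymm (Fin k) ℝ ((i : ℕ) + 1)) F := esymmAlgHom_apply F
  refine ⟨expand 2 (T : MvPolynomial (Fin k) ℝ), ?_, ?_⟩
  · intro σ ε hε x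
    rw [eval_expand_two, eval_expand_two]
    have h1 : (fun j => (ε j * x (σ j)) ^ 2) = (fun j => (x j) ^ 2) ∘ σ := by
      funext j
      rcases hε j with h | h <;> simp [h, Function.comp, mul_pow] <;> norm_num
    rw [h1, ← eval_rename, T.2 σ]
  · intro x
    rw [eval_expand_two]
    have hp2 : (fun j => padk k n x j ^ 2) = padk k n (fun i => x i ^ 2) := by
      funext j
      by_cases hj : (j : ℕ) < k - n
      · rw [padk_low x j hj, padk_low _ j hj]
        norm_num
      · unfold padk
        rw [dif_neg hj, dif_neg hj]
    rw [hp2, hTval, eval_aeval']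
    have hfun : (fun i : Fin n =>
        eval (padk k n fun i => x i ^ 2) (esymm (Fin k) ℝ ((i : ℕ) + 1))) =
        fun i : Fin n => eval (fun i => x i ^ 2) (esymm (Fin n) ℝ ((i : ℕ) + 1)) := by
      funext i
      exact eval_esymm_padk hkn _ _
    rw [hfun, ← eval_aeval', hFval, ← eval_expand_two, hS]

/-- for `1 ≤ n < k`, the algebra of restrictions
`{x ↦ Q(0_{k-n}, x) : Q a W(D_k)-invariant polynomial on ℝ^k}` equals the
algebra of `H_n`-invariant polynomial functions on `ℝ^n`, and also equals the
algebra of restrictions of the `H_k`-invariant polynomials on `ℝ^k`. -/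
theorem stmt_7 (n k : ℕ) (hn : 1 ≤ n) (hnk : n < k) :
    ({f : (Fin n → ℝ) → ℝ | ∃ Q : MvPolynomial (Fin k) ℝ, DInv k Q ∧
        f = fun x => MvPolynomial.eval (padk k n x) Q} =
      {f : (Fin n → ℝ) → ℝ | ∃ P : MvPolynomial (Fin n) ℝ, HInv n P ∧
        f = fun x => MvPolynomial.eval x P}) ∧
    ({f : (Fin n → ℝ) → ℝ | ∃ Q : MvPolynomial (Fin k) ℝ, DInv k Q ∧
        f = fun x => MvPolynomial.eval (padk k n x) Q} =
      {f : (Fin n → ℝ) → ℝ | ∃ Q : MvPolynomial (Fin k) ℝ, HInv k Q ∧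
        f = fun x => MvPolynomial.eval (padk k n x) Q}) := by
  have hDtoH : ∀ f : (Fin n → ℝ) → ℝ,
      (∃ Q : MvPolynomial (Fin k) ℝ, DInv k Q ∧
        f = fun x => MvPolynomial.eval (padk k n x) Q) →
      (∃ P : MvPolynomial (Fin n) ℝ, HInv n P ∧
        f = fun x => MvPolynomial.eval x P) := by
    rintro f ⟨Q, hQ, rfl⟩
    obtain ⟨P, hP, hPe⟩ := L1 hn hnk hQ
    exact ⟨P, hP, funext hPe⟩
  have hHtoD : ∀ f : (Fin n → ℝ) → ℝ,
      (∃ P : MvPolynomial (Fin n) ℝ, HInv n P ∧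
        f = fun x => MvPolynomial.eval x P) →
      (∃ Q : MvPolynomial (Fin k) ℝ, HInv k Q ∧
        f = fun x => MvPolynomial.eval (padk k n x) Q) := by
    rintro f ⟨P, hP, rfl⟩
    obtain ⟨Q, hQ, hQe⟩ := L2 hnk hP
    exact ⟨Q, hQ, (funext hQe).symm⟩
  have hHD : ∀ Q : MvPolynomial (Fin k) ℝ, HInv k Q → DInv k Q := by
    intro Q hQ σ ε hε _ x
    exact hQ σ ε hε x
  constructor
  · ext f
    constructor
    · exact hDtoH f
    · rintro hf
      obtain ⟨Q, hQ, hfe⟩ := hHtoD f hf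
      exact ⟨Q, hHD Q hQ, hfe⟩
  · ext f
    constructor
    · intro hf
      exact hHtoD f (hDtoH f hf)
    · rintro ⟨Q, hQ, rfl⟩
      exact ⟨Q, hHD Q hQ, rfl⟩
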